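/- Let V be a maximal isotropic subspace with respect to ω, let ψ₀ be a stabilizer state for V, and consider the syndrome state 𝕊ψ₀ = σ(e,f).mulVec (σ(c,d).mulVec ψ₀) obtained by applying an error spinor σ(e,f) after a codeword spinor σ(c,d). Then for every (a,b) ∈ V, the syndrome state is an eigenvector of σ(a,b): σ(a,b).mulVec (𝕊ψ₀) = (-1)^(ω((a,b),(c+e,d+f))) • 𝕊ψ₀. (Paper's Lemma 6: each syndrome state is an eigenvector of each spinor of the Cartanion.) -/

import Mathlib

open Matrix BigOperators

/-- The mod-2 dot product of two bitstrings. -/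
def dotp {p : ℕ} (a b : Fin p → ZMod 2) : ZMod 2 := ∑ i, a i * b i

/-- The sign `(-1)^t` for `t : ZMod 2`. -/
noncomputable def sgn (t : ZMod 2) : ℂ := (-1 : ℂ) ^ t.val

/-- The Pauli spinor matrix `σ(a,b)`, representing `⊗ᵢ X^(a i) Z^(b i)`:
`σ(a,b) x y = (-1)^(b⬝x)` if `y = x + a` and `0` otherwise. -/
noncomputable def pauli {p : ℕ} (a b : Fin p → ZMod 2) :
    Matrix (Fin p → ZMod 2) (Fin p → ZMod 2) ℂ :=
  fun x y => if y = x + a then sgn (dotp b x) else 0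

/-- The symplectic form `ω((a,b),(c,d)) = a⬝d + b⬝c` on pairs of bitstrings. -/
def omegaF {p : ℕ} (u v : (Fin p → ZMod 2) × (Fin p → ZMod 2)) : ZMod 2 :=
  dotp u.1 v.2 + dotp u.2 v.1

/-- A subspace is isotropic if `ω` vanishes on all pairs of its elements. -/
def IsIsotropic {p : ℕ}
    (V : Submodule (ZMod 2) ((Fin p → ZMod 2) × (Fin p → ZMod 2))) : Prop :=
  ∀ u ∈ V, ∀ v ∈ V, omegaF u v = 0

/-- A maximal isotropic subspace: isotropic and not properly contained in any
isotropic subspace. -/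
def IsMaxIsotropic {p : ℕ}
    (V : Submodule (ZMod 2) ((Fin p → ZMod 2) × (Fin p → ZMod 2))) : Prop :=
  IsIsotropic V ∧ ∀ W, IsIsotropic W → V ≤ W → W = V

lemma pauli_mulVec_apply {p : ℕ} (a b : Fin p → ZMod 2) (v : (Fin p → ZMod 2) → ℂ)
    (x : Fin p → ZMod 2) :
    (pauli a b).mulVec v x = sgn (dotp b x) * v (x + a) := by
  simp [Matrix.mulVec, dotProduct, pauli, ite_mul]

lemma sgn_add (s t : ZMod 2) : sgn (s + t) = sgn s * sgn t := by
  simp only [sgn]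
  rw [← pow_add, ZMod.val_add, ← neg_one_pow_eq_pow_mod_two]

lemma sgn_sq (t : ZMod 2) : sgn t * sgn t = 1 := by
  fin_cases t <;>
    norm_num [sgn, show ((1:ZMod 2)).val = 1 from rfl, show ((0:ZMod 2)).val = 0 from rfl] <;>
    simp [ZMod.val]

lemma dotp_add_right {p : ℕ} (a x y : Fin p → ZMod 2) :
    dotp a (x + y) = dotp a x + dotp a y := by
  simp [dotp, mul_add, Finset.sum_add_distrib]

lemma dotp_comm {p : ℕ} (a b : Fin p → ZMod 2) : dotp a b = dotp b a := by
  simp [dotp, mul_comm]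

/-- Paper's Lemma 6: For a stabilizer state `ψ₀` of a maximal isotropic
subspace `V` and a syndrome state `𝕊ψ₀ = σ(e,f).mulVec (σ(c,d).mulVec ψ₀)`, each
`(a,b) ∈ V` has `𝕊ψ₀` as an eigenvector:
`σ(a,b).mulVec 𝕊ψ₀ = (-1)^(ω((a,b),(c+e,d+f))) • 𝕊ψ₀`. -/
theorem syndrome_eigenvector {p : ℕ} (hp : 1 ≤ p)
    (V : Submodule (ZMod 2) ((Fin p → ZMod 2) × (Fin p → ZMod 2)))
    (hV : IsMaxIsotropic V) (ψ₀ : (Fin p → ZMod 2) → ℂ) (hψ₀ : ψ₀ ≠ 0)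
    (hstab : ∀ u ∈ V, (pauli u.1 u.2).mulVec ψ₀ = ψ₀)
    (c d e f : Fin p → ZMod 2) :
    ∀ u ∈ V,
      (pauli u.1 u.2).mulVec ((pauli e f).mulVec ((pauli c d).mulVec ψ₀)) =
        sgn (omegaF u (c + e, d + f)) •
          (pauli e f).mulVec ((pauli c d).mulVec ψ₀) := by
  rintro ⟨a, b⟩ hu
  funext x
  have hs := congrFun (hstab (a, b) hu) (x + c + e)
  rw [pauli_mulVec_apply] at hs
  have hpsi : ψ₀ (x + c + e + a) = sgn (dotp b (x + c + e)) * ψ₀ (x + c + e) := by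
    rw [← hs, ← mul_assoc, sgn_sq, one_mul]
  simp only [Pi.smul_apply, smul_eq_mul, pauli_mulVec_apply]
  have harr : x + a + e + c = x + c + e + a := by abel
  rw [harr, hpsi]
  simp only [omegaF, dotp_add_right, sgn_add, dotp_comm a d, dotp_comm a f]
  rw [show x + e + c = x + c + e by abel]
  ring_nf
  rw [show sgn (dotp b x) ^ 2 = 1 by rw [sq]; exact sgn_sq _]
  ring
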